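/- Riccati-type comparison lemma: Let a < b be real numbers, c > 0, m > 0, let W ⊆ [a,b] be Lebesgue measurable with measure |W| ≥ m, and let f : [a,b] → (0,∞) be differentiable with f'(t) ≤ −c·χ_W(t)·f(t)² for every t ∈ [a,b], where χ_W is the indicator function of W. Then f(b) ≤ 1/(c·m). -/

import Mathlib

open MeasureTheory Real Set

/-- **Riccati-type comparison lemma.** If `f : [a,b] → (0,∞)` is differentiable with
`f'(t) ≤ −c·χ_W(t)·f(t)²` on `[a,b]`, where `W ⊆ [a,b]` has Lebesgue measure at least
`m > 0` and `c > 0`, then `f(b) ≤ 1/(c·m)`. -/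
theorem riccati_comparison
    (a b c m : ℝ) (W : Set ℝ) (f : ℝ → ℝ)
    (hab : a < b) (hc : 0 < c) (hm : 0 < m)
    (hW_sub : W ⊆ Icc a b) (hW_meas : MeasurableSet W)
    (hW_vol : ENNReal.ofReal m ≤ volume W)
    (hf_pos : ∀ t ∈ Icc a b, 0 < f t)
    (hf_diff : DifferentiableOn ℝ f (Icc a b))
    (hf_deriv : ∀ t ∈ Icc a b,
      derivWithin f (Icc a b) t ≤ -c * W.indicator (fun _ => (1:ℝ)) t * (f t) ^ 2) :
    f b ≤ 1 / (c * m) := by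
  set F : ℝ → ℝ := fun t => -(f t)⁻¹ with hF
  set F' : ℝ → ℝ := fun t => derivWithin f (Icc a b) t / (f t) ^ 2 with hF'
  set φ : ℝ → ℝ := fun t => -(c * W.indicator (fun _ => (1:ℝ)) t) with hφdef
  have hfa : a ∈ Icc a b := ⟨le_rfl, hab.le⟩
  have hfb : b ∈ Icc a b := ⟨hab.le, le_rfl⟩
  have hcont : ContinuousOn F (Icc a b) := by
    exact (hf_diff.continuousOn.inv₀ (fun x hx => (hf_pos x hx).ne')).neg
  have hderiv : ∀ x ∈ Ioo a b, HasDerivWithinAt F (F' x) (Ioi x) x := by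
    intro x hx
    have hxI : x ∈ Icc a b := Ioo_subset_Icc_self hx
    have hnhds : Icc a b ∈ nhds x := Icc_mem_nhds hx.1 hx.2
    have h1 : HasDerivWithinAt f (derivWithin f (Icc a b) x) (Icc a b) x :=
      (hf_diff x hxI).hasDerivWithinAt
    have h2 : HasDerivAt f (derivWithin f (Icc a b) x) x := h1.hasDerivAt hnhds
    have h3 : HasDerivAt F _ x := (h2.inv (hf_pos x hxI).ne').neg
    have : HasDerivAt F (F' x) x := by
      convert h3 using 1
      simp [hF']
      ring
    exact this.hasDerivWithinAt
  have hφint : IntegrableOn φ (Icc a b) := by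
    have : IntegrableOn (W.indicator (fun _ => (1:ℝ))) (Icc a b) :=
      (integrableOn_const measure_Icc_lt_top.ne).indicator hW_meas
    exact ((this.const_mul c).neg)
  have hφg : ∀ x ∈ Ioo a b, F' x ≤ φ x := by
    intro x hx
    have hxI : x ∈ Icc a b := Ioo_subset_Icc_self hx
    have hfx := hf_pos x hxI
    have h := hf_deriv x hxI
    have hsq : (0:ℝ) < (f x) ^ 2 := pow_pos hfx 2
    rw [hF', div_le_iff₀ hsq] at *
    calc derivWithin f (Icc a b) x ≤ -c * W.indicator (fun _ => (1:ℝ)) x * (f x) ^ 2 := h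
      _ = φ x * f x ^ 2 := by rw [hφdef]; ring
  have key := intervalIntegral.sub_le_integral_of_hasDeriv_right_of_le hab.le hcont hderiv hφint hφg
  -- compute the integral
  have hWIoc : volume (W ∩ Ioc a b) = volume W := by
    have hnull : volume (W \ Ioc a b) = 0 := by
      apply measure_mono_null (fun x hx => ?_) (volume_singleton (a := a))
      rcases hx with ⟨hxW, hxnI⟩
      have hxI := hW_sub hxW
      simp only [mem_Ioc, not_and_or, not_lt, not_le] at hxnI
      have : x = a := by
        rcases hxnI with h | h
        · exact le_antisymm h hxI.1
        · exact absurd hxI.2 (not_le.2 h)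
      simp [this]
    have := measure_inter_add_diff (μ := volume) W (measurableSet_Ioc (a := a) (b := b))
    rw [hnull, add_zero] at this
    exact this
  have hint : ∫ y in a..b, φ y = -(c * (volume W).toReal) := by
    rw [intervalIntegral.integral_of_le hab.le]
    have : ∫ y in Ioc a b, φ y = -(c * ∫ y in Ioc a b, W.indicator (fun _ => (1:ℝ)) y) := by
      simp only [hφdef]
      rw [integral_neg, integral_const_mul]
    rw [this, setIntegral_indicator hW_meas]
    simp only [integral_const, smul_eq_mul, mul_one]
    rw [measureReal_restrict_apply_univ, inter_comm, measureReal_def, hWIoc]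
  rw [hint] at key
  have hvolfin : volume W < ⊤ :=
    lt_of_le_of_lt (measure_mono hW_sub) measure_Icc_lt_top
  have hmle : m ≤ (volume W).toReal := by
    have := ENNReal.toReal_mono hvolfin.ne hW_vol
    rwa [ENNReal.toReal_ofReal hm.le] at this
  have h1 : c * m ≤ c * (volume W).toReal := by
    exact mul_le_mul_of_nonneg_left hmle hc.le
  have h2 : c * m ≤ (f b)⁻¹ := by
    have hFa : (0:ℝ) < (f a)⁻¹ := inv_pos.2 (hf_pos a hfa)
    have : F b - F a ≤ -(c * m) := key.trans (by linarith)
    simp only [hF] at this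
    linarith
  rw [one_div, ← inv_inv (f b)]
  exact inv_anti₀ (mul_pos hc hm) h2
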